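/- Let λ ∈ (0, 1). Let N ≥ 1 and let (y_k)_{k≥0} and (l_k)_{k≥1} be sequences of vectors in ℝ^N with y_0 = 0 and y_{k+1} = λ(2y_k − y_{k−1} + l_k) for all k ≥ 1. Then for every k ≥ 0, (1 − λ) · ‖y_{k+1}‖² ≤ 2λ^k‖y_1‖² + 2λ² · (Σ_{s=1}^{k} λ^{(k−s)/2} ‖l_s‖)². -/

import Mathlib

open Finset

section Aux
variable {E : Type*} [NormedAddCommGroup E] [InnerProductSpace ℝ E]

omit [InnerProductSpace ℝ E] in
lemma aux_norm_sq (a b : E) :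
    ‖(WithLp.equiv 2 (E × E)).symm (a, b)‖ ^ 2 = ‖a‖ ^ 2 + ‖b‖ ^ 2 := by
  rw [WithLp.prod_norm_sq_eq_of_L2]
  simp

lemma aux_rot_sq (lam mu : ℝ) (h : mu ^ 2 = lam * (1 - lam)) (a b : E) :
    ‖(WithLp.equiv 2 (E × E)).symm (lam • a - mu • b, mu • a + lam • b)‖ ^ 2
      = lam * ‖(WithLp.equiv 2 (E × E)).symm (a, b)‖ ^ 2 := by
  rw [aux_norm_sq, aux_norm_sq]
  have h1 : ‖lam • a - mu • b‖ ^ 2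
      = lam^2*‖a‖^2 - 2*(lam*mu)*(inner ℝ a b : ℝ) + mu^2*‖b‖^2 := by
    rw [norm_sub_sq_real, inner_smul_left, inner_smul_right, norm_smul, norm_smul]
    simp [Real.norm_eq_abs, mul_pow, sq_abs]
    ring
  have h2 : ‖mu • a + lam • b‖ ^ 2
      = mu^2*‖a‖^2 + 2*(lam*mu)*(inner ℝ a b : ℝ) + lam^2*‖b‖^2 := by
    rw [norm_add_sq_real, inner_smul_left, inner_smul_right, norm_smul, norm_smul]
    simp [Real.norm_eq_abs, mul_pow, sq_abs]
    ring
  rw [h1, h2]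
  nlinarith [sq_nonneg mu]

lemma aux_rot (lam mu : ℝ) (h : mu ^ 2 = lam * (1 - lam)) (hl0 : 0 ≤ lam) (a b : E) :
    ‖(WithLp.equiv 2 (E × E)).symm (lam • a - mu • b, mu • a + lam • b)‖
      = Real.sqrt lam * ‖(WithLp.equiv 2 (E × E)).symm (a, b)‖ := by
  have h1 : ‖(WithLp.equiv 2 (E × E)).symm (lam • a - mu • b, mu • a + lam • b)‖
      = Real.sqrt (lam * ‖(WithLp.equiv 2 (E × E)).symm (a, b)‖ ^ 2) := by
    rw [← aux_rot_sq lam mu h a b, Real.sqrt_sq (norm_nonneg _)]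
  rw [h1, Real.sqrt_mul hl0, Real.sqrt_sq (norm_nonneg _)]

lemma stmt_9_gen (lam : ℝ) (hl0 : 0 < lam) (hl1 : lam < 1)
    (y : ℕ → E) (l : ℕ → E)
    (hy0 : y 0 = 0)
    (hrec : ∀ k, 1 ≤ k → y (k + 1) = lam • ((2 : ℝ) • y k - y (k - 1) + l k))
    (k : ℕ) :
    (1 - lam) * ‖y (k + 1)‖ ^ 2 ≤ 2 * lam ^ k * ‖y 1‖ ^ 2 +
      2 * lam ^ 2 * (∑ s ∈ Finset.Icc 1 k, (Real.sqrt lam) ^ (k - s) * ‖l s‖) ^ 2 := by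
  set mu := Real.sqrt (lam * (1 - lam)) with hmu
  have hmusq : mu ^ 2 = lam * (1 - lam) := Real.sq_sqrt (by nlinarith)
  set z : ℕ → WithLp 2 (E × E) :=
    fun n => (WithLp.equiv 2 (E × E)).symm (y (n+1) - lam • y n, mu • y n) with hz
  -- one–step estimate
  have hstep : ∀ n : ℕ, ‖z (n+1)‖ ≤ Real.sqrt lam * ‖z n‖ + lam * ‖l (n+1)‖ := by
    intro n
    set a : E := y (n+1) - lam • y n with ha
    set b : E := mu • y n with hb
    have hdec : z (n+1) = (WithLp.equiv 2 (E × E)).symm (lam • a - mu • b, mu • a + lam • b)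
        + (WithLp.equiv 2 (E × E)).symm (lam • l (n+1), 0) := by
      simp only [WithLp.equiv_symm_apply]; rw [← WithLp.toLp_add]
      show (WithLp.equiv 2 (E × E)).symm (y (n+1+1) - lam • y (n+1), mu • y (n+1)) = _
      congr 1
      rw [Prod.mk_add_mk]
      have hy2 : y (n+1+1) = lam • ((2:ℝ) • y (n+1) - y n + l (n+1)) := by
        have h := hrec (n+1) (by omega)
        simpa using h
      have hmm : mu • mu • y n = (lam * (1-lam)) • y n := by
        rw [smul_smul, ← hmusq, sq]
      have hfst : y (n+1+1) - lam • y (n+1) = lam • a - mu • b + lam • l (n+1) := by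
        rw [hy2, ha, hb, hmm]
        module
      have hsnd : mu • y (n+1) = mu • a + lam • b + 0 := by
        rw [ha, hb]
        module
      rw [hfst, hsnd]; rfl
    have hR : ‖(WithLp.equiv 2 (E × E)).symm (lam • a - mu • b, mu • a + lam • b)‖
        = Real.sqrt lam * ‖z n‖ := aux_rot lam mu hmusq hl0.le a b
    have hU : ‖(WithLp.equiv 2 (E × E)).symm ((lam • l (n+1) : E), (0:E))‖ = lam * ‖l (n+1)‖ := by
      rw [WithLp.equiv_symm_apply, WithLp.norm_toLp_fst, norm_smul, Real.norm_eq_abs, abs_of_pos hl0]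
    calc ‖z (n+1)‖ ≤ ‖(WithLp.equiv 2 (E × E)).symm (lam • a - mu • b, mu • a + lam • b)‖
          + ‖(WithLp.equiv 2 (E × E)).symm ((lam • l (n+1) : E), (0:E))‖ := by
            rw [hdec]; exact norm_add_le _ _
      _ = Real.sqrt lam * ‖z n‖ + lam * ‖l (n+1)‖ := by rw [hR, hU]
  -- main induction
  have hsum : ∀ n : ℕ, Real.sqrt lam * ∑ s ∈ Icc 1 n, (Real.sqrt lam)^(n-s) * ‖l s‖
      = ∑ s ∈ Icc 1 n, (Real.sqrt lam)^(n+1-s) * ‖l s‖ := by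
    intro n
    rw [Finset.mul_sum]
    refine Finset.sum_congr rfl fun s hs => ?_
    simp only [Finset.mem_Icc] at hs
    have h' : n+1-s = (n-s)+1 := by omega
    rw [h', pow_succ]
    ring
  have hbound : ∀ n : ℕ, ‖z n‖ ≤ (Real.sqrt lam)^n * ‖y 1‖
      + lam * ∑ s ∈ Icc 1 n, (Real.sqrt lam)^(n-s) * ‖l s‖ := by
    intro n
    induction n with
    | zero =>
      have h0 : z 0 = (WithLp.equiv 2 (E × E)).symm ((y 1 : E), (0:E)) := by
        show (WithLp.equiv 2 (E × E)).symm (y (0+1) - lam • y 0, mu • y 0) = _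
        rw [hy0]
        simp
      rw [h0, WithLp.equiv_symm_apply, WithLp.norm_toLp_fst]
      simp
    | succ n ih =>
      have h1 := hstep n
      have h2 : Real.sqrt lam * ‖z n‖ ≤ Real.sqrt lam *
          ((Real.sqrt lam)^n * ‖y 1‖ + lam * ∑ s ∈ Icc 1 n, (Real.sqrt lam)^(n-s) * ‖l s‖) :=
        mul_le_mul_of_nonneg_left ih (Real.sqrt_nonneg lam)
      have h3 : ∑ s ∈ Icc 1 (n+1), (Real.sqrt lam)^(n+1-s) * ‖l s‖
          = (∑ s ∈ Icc 1 n, (Real.sqrt lam)^(n+1-s) * ‖l s‖) + ‖l (n+1)‖ := by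
        rw [Finset.sum_Icc_succ_top (by omega : 1 ≤ n+1)]
        simp
      calc ‖z (n+1)‖ ≤ Real.sqrt lam * ‖z n‖ + lam * ‖l (n+1)‖ := h1
        _ ≤ Real.sqrt lam * ((Real.sqrt lam)^n * ‖y 1‖
              + lam * ∑ s ∈ Icc 1 n, (Real.sqrt lam)^(n-s) * ‖l s‖) + lam * ‖l (n+1)‖ := by
            linarith
        _ = (Real.sqrt lam)^(n+1) * ‖y 1‖
              + lam * ((Real.sqrt lam) * ∑ s ∈ Icc 1 n, (Real.sqrt lam)^(n-s) * ‖l s‖ + ‖l (n+1)‖) := by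
            rw [pow_succ]; ring
        _ = (Real.sqrt lam)^(n+1) * ‖y 1‖
              + lam * ∑ s ∈ Icc 1 (n+1), (Real.sqrt lam)^(n+1-s) * ‖l s‖ := by
            rw [hsum, h3]
  -- lower bound on ‖z k‖²
  have hkey : (1 - lam) * ‖y (k+1)‖ ^ 2 ≤ ‖z k‖ ^ 2 := by
    have hzk : ‖z k‖ ^ 2 = ‖y (k+1) - lam • y k‖^2 + mu^2 * ‖y k‖^2 := by
      show ‖(WithLp.equiv 2 (E × E)).symm (y (k+1) - lam • y k, mu • y k)‖ ^ 2 = _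
      rw [aux_norm_sq, norm_smul, Real.norm_eq_abs, mul_pow, sq_abs]
    set a : E := y (k+1) - lam • y k with ha
    have hy1 : y (k+1) = a + lam • y k := by rw [ha]; abel
    have h1 : ‖a + lam • y k‖^2 = ‖a‖^2 + 2*lam*(inner ℝ a (y k) : ℝ) + lam^2*‖y k‖^2 := by
      rw [norm_add_sq_real, inner_smul_right, norm_smul, Real.norm_eq_abs, mul_pow, sq_abs]
      ring
    have h2 : (0:ℝ) ≤ ‖a - (1-lam) • y k‖^2 := sq_nonneg _
    have h2' : ‖a - (1-lam) • y k‖^2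
        = ‖a‖^2 - 2*(1-lam)*(inner ℝ a (y k) : ℝ) + (1-lam)^2*‖y k‖^2 := by
      rw [norm_sub_sq_real, inner_smul_right, norm_smul, Real.norm_eq_abs, mul_pow, sq_abs]
      ring
    rw [hzk, hy1, h1]
    rw [h2'] at h2
    nlinarith
  -- conclude
  have hA : (0:ℝ) ≤ (Real.sqrt lam)^k * ‖y 1‖ :=
    mul_nonneg (pow_nonneg (Real.sqrt_nonneg _) _) (norm_nonneg _)
  have hS : (0:ℝ) ≤ ∑ s ∈ Icc 1 k, (Real.sqrt lam)^(k-s) * ‖l s‖ :=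
    Finset.sum_nonneg fun s _ => mul_nonneg (pow_nonneg (Real.sqrt_nonneg _) _) (norm_nonneg _)
  have hzsq : ‖z k‖^2 ≤ ((Real.sqrt lam)^k * ‖y 1‖
      + lam * ∑ s ∈ Icc 1 k, (Real.sqrt lam)^(k-s) * ‖l s‖)^2 := by
    have hb := hbound k
    nlinarith [norm_nonneg (z k)]
  have hlamk : ((Real.sqrt lam)^k)^2 = lam^k := by
    rw [← pow_mul, mul_comm, pow_mul, Real.sq_sqrt hl0.le]
  nlinarith [sq_nonneg ((Real.sqrt lam)^k * ‖y 1‖ - lam * ∑ s ∈ Icc 1 k, (Real.sqrt lam)^(k-s) * ‖l s‖),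
    hkey, hzsq, sq_nonneg (‖y 1‖)]

end Aux

theorem stmt_9 (lam : ℝ) (hlam : lam ∈ Set.Ioo (0 : ℝ) 1)
    (N : ℕ) (hN : 1 ≤ N)
    (y : ℕ → EuclideanSpace ℝ (Fin N)) (l : ℕ → EuclideanSpace ℝ (Fin N))
    (hy0 : y 0 = 0)
    (hrec : ∀ k, 1 ≤ k → y (k + 1) = lam • ((2 : ℝ) • y k - y (k - 1) + l k))
    (k : ℕ) :
    (1 - lam) * ‖y (k + 1)‖ ^ 2 ≤ 2 * lam ^ k * ‖y 1‖ ^ 2 +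
      2 * lam ^ 2 * (∑ s ∈ Finset.Icc 1 k, (Real.sqrt lam) ^ (k - s) * ‖l s‖) ^ 2 :=
  stmt_9_gen lam hlam.1 hlam.2 y l hy0 hrec k
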